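/- arXiv:0809.2021 — 7 statements merged into one kernel-verified Lean document; each statement's English description precedes it below -/
import Mathlib

section
/- Let (R, P) be a discrete valuation ring with maximal ideal P and let c be a semiprime operation on R. If there exist integers m < n with c(P^i) constant for m ≤ i ≤ n (equivalently, c(P^m) = c(P^n)), then there exists an integer j ≤ m such that c(P^i) = P^j for all i ≥ j. -/
/-- A closure operation on the set of ideals of a commutative ring. -/
def IsClosureOperation {R : Type*} [CommRing R] (c : Ideal R → Ideal R) : Prop :=
  (∀ I : Ideal R, I ≤ c I) ∧ (∀ I J : Ideal R, I ≤ J → c I ≤ c J) ∧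
    (∀ I : Ideal R, c (c I) = c I)

/-- A semiprime operation: a closure operation satisfying `c I * c J ≤ c (I * J)`. -/
def IsSemiprimeOperation {R : Type*} [CommRing R] (c : Ideal R → Ideal R) : Prop :=
  IsClosureOperation c ∧ ∀ I J : Ideal R, c I * c J ≤ c (I * J)

/-- A prime operation: a semiprime operation satisfying `c (bI) = b • c I` for every
non-zerodivisor `b`. -/
def IsPrimeOperation {R : Type*} [CommRing R] (c : Ideal R → Ideal R) : Prop :=
  IsSemiprimeOperation c ∧
    ∀ b : R, b ∈ nonZeroDivisors R → ∀ I : Ideal R,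
      c (Ideal.span {b} * I) = Ideal.span {b} * c I

theorem dvr_semiprime_constant_interval {R : Type*} [CommRing R] [IsDomain R]
    [IsDiscreteValuationRing R] (P : Ideal R) (hP : P = IsLocalRing.maximalIdeal R)
    (c : Ideal R → Ideal R) (hc : IsSemiprimeOperation c)
    (m n : ℕ) (hmn : m < n) (h : c (P ^ m) = c (P ^ n)) :
    ∃ j : ℕ, j ≤ m ∧ ∀ i : ℕ, j ≤ i → c (P ^ i) = P ^ j := by
  obtain ⟨⟨hext, hmono, hidem⟩, hsp⟩ := hc
  obtain ⟨ϖ, hϖ⟩ := IsDiscreteValuationRing.exists_irreducible R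
  have hPspan : P = Ideal.span {ϖ} := by rw [hP, hϖ.maximalIdeal_eq]
  have hϖ0 : ϖ ≠ 0 := hϖ.ne_zero
  -- basic facts about powers of P
  have hle : ∀ a b : ℕ, P ^ a ≤ P ^ b ↔ b ≤ a := by
    intro a b
    rw [hPspan, Ideal.span_singleton_pow, Ideal.span_singleton_pow,
      Ideal.span_singleton_le_span_singleton, pow_dvd_pow_iff hϖ0 hϖ.not_isUnit]
  have hne : ∀ a b : ℕ, a ≠ b → P ^ a ≠ P ^ b := by
    intro a b hab heq
    have h1 := (hle a b).1 heq.le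
    have h2 := (hle b a).1 heq.ge
    omega
  have hbot : ∀ a : ℕ, P ^ a ≠ ⊥ := by
    intro a
    rw [hPspan, Ideal.span_singleton_pow, Ne, Ideal.span_singleton_eq_bot]
    exact pow_ne_zero a hϖ0
  -- the closure of a power of P is a power of P
  have hpow : ∀ a : ℕ, ∃ s : ℕ, c (P ^ a) = P ^ s := by
    intro a
    have hcb : c (P ^ a) ≠ ⊥ := by
      intro hb
      exact hbot a (le_bot_iff.1 (hb ▸ hext (P ^ a)))
    obtain ⟨s, hs⟩ := IsDiscreteValuationRing.ideal_eq_span_pow_irreducible hcb hϖ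
    exact ⟨s, by rw [hs, hPspan, Ideal.span_singleton_pow]⟩
  obtain ⟨j, hcm⟩ := hpow m
  have hjm : j ≤ m := (hle m j).1 (hcm ▸ hext (P ^ m))
  -- c fixes P ^ j
  have hcj : c (P ^ j) = P ^ j := by
    have := hidem (P ^ m)
    rwa [hcm] at this
  -- c (P ^ (j+1)) = P ^ j
  have hcj1 : c (P ^ (j + 1)) = P ^ j := by
    apply le_antisymm
    · calc c (P ^ (j + 1)) ≤ c (P ^ j) := hmono _ _ ((hle _ _).2 (by omega))
        _ = P ^ j := hcj
    · calc P ^ j = c (P ^ n) := (h ▸ hcm).symm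
        _ ≤ c (P ^ (j + 1)) := hmono _ _ ((hle _ _).2 (by omega))
  refine ⟨j, hjm, ?_⟩
  intro i hi
  induction i, hi using Nat.le_induction with
  | base => exact hcj
  | succ i hi ih =>
    -- upper bound
    have hupper : c (P ^ (i + 1)) ≤ P ^ j := by
      calc c (P ^ (i + 1)) ≤ c (P ^ i) := hmono _ _ ((hle _ _).2 (by omega))
        _ = P ^ j := ih
    -- lower bound : P ^ (j+1) ≤ c (P ^ (i+1))
    have hlower : P ^ (j + 1) ≤ c (P ^ (i + 1)) := by
      have h1 : P ^ j * P ≤ c (P ^ i) * c (P ^ 1) := by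
        apply Ideal.mul_mono
        · rw [← ih]
        · exact le_trans (le_of_eq (pow_one P).symm) (hext (P ^ 1))
      have h2 : c (P ^ i) * c (P ^ 1) ≤ c (P ^ i * P ^ 1) := hsp _ _
      calc P ^ (j + 1) = P ^ j * P := by rw [pow_succ]
        _ ≤ c (P ^ i * P ^ 1) := le_trans h1 h2
        _ = c (P ^ (i + 1)) := by rw [← pow_add]
    obtain ⟨s, hs⟩ := hpow (i + 1)
    have hsj : j ≤ s := (hle _ _).1 (hs ▸ hupper)
    have hsj1 : s ≤ j + 1 := (hle _ _).1 (hs ▸ hlower)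
    rcases Nat.eq_or_lt_of_le hsj with heq | hlt
    · rw [hs, ← heq]
    · -- s = j + 1, contradiction with c (P ^ (j+1)) = P ^ j
      have hseq : s = j + 1 := by omega
      exfalso
      apply hne j (j + 1) (by omega)
      have : c (P ^ s) = P ^ s := by
        have := hidem (P ^ (i + 1))
        rwa [hs] at this
      rw [hseq] at this
      rw [← hcj1, this]
end

section
/- Let (R, P) be a discrete valuation ring with maximal ideal P. A map c from the set of ideals of R to itself is a semiprime operation if and only if either c is the identity map, or there exists an integer m ≥ 0 such that c(P^i) = P^i for 0 ≤ i < m, c(P^i) = P^m for all i ≥ m, and either c(0) = (0) or c(0) = P^m. -/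
section Aux

variable {R : Type*} [CommRing R] [IsDomain R] [IsDiscreteValuationRing R]
  {P : Ideal R} (hP : P = IsLocalRing.maximalIdeal R)

include hP

theorem dvr_aux_le {i j : ℕ} : P ^ i ≤ P ^ j ↔ j ≤ i := by
  obtain ⟨π, hπ⟩ := IsDiscreteValuationRing.exists_irreducible R
  have hspan : P = Ideal.span {π} := by rw [hP, hπ.maximalIdeal_eq]
  rw [hspan, Ideal.span_singleton_pow, Ideal.span_singleton_pow,
    Ideal.span_singleton_le_span_singleton,
    pow_dvd_pow_iff hπ.ne_zero hπ.not_isUnit]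

theorem dvr_aux_ne (i : ℕ) : (P ^ i : Ideal R) ≠ 0 := by
  obtain ⟨π, hπ⟩ := IsDiscreteValuationRing.exists_irreducible R
  have hspan : P = Ideal.span {π} := by rw [hP, hπ.maximalIdeal_eq]
  rw [hspan, Ideal.span_singleton_pow]
  simpa [Ideal.zero_eq_bot, Ideal.span_singleton_eq_bot] using pow_ne_zero i hπ.ne_zero

theorem dvr_aux_inj {i j : ℕ} (h : (P ^ i : Ideal R) = P ^ j) : i = j := by
  have h1 := (dvr_aux_le hP (i := i) (j := j)).mp h.le
  have h2 := (dvr_aux_le hP (i := j) (j := i)).mp h.ge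
  omega

theorem dvr_aux_classify (I : Ideal R) : I = 0 ∨ ∃ n, I = P ^ n := by
  obtain ⟨π, hπ⟩ := IsDiscreteValuationRing.exists_irreducible R
  have hspan : P = Ideal.span {π} := by rw [hP, hπ.maximalIdeal_eq]
  by_cases hI : I = ⊥
  · exact Or.inl (by simpa [Ideal.zero_eq_bot] using hI)
  · obtain ⟨n, hn⟩ := IsDiscreteValuationRing.ideal_eq_span_pow_irreducible hI hπ
    exact Or.inr ⟨n, by rw [hn, hspan, Ideal.span_singleton_pow]⟩

end Aux

theorem dvr_semiprime_classification {R : Type*} [CommRing R] [IsDomain R]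
    [IsDiscreteValuationRing R] (P : Ideal R) (hP : P = IsLocalRing.maximalIdeal R)
    (c : Ideal R → Ideal R) :
    IsSemiprimeOperation c ↔
      c = id ∨
        ∃ m : ℕ,
          (∀ i : ℕ, i < m → c (P ^ i) = P ^ i) ∧
            (∀ i : ℕ, m ≤ i → c (P ^ i) = P ^ m) ∧
              (c 0 = 0 ∨ c 0 = P ^ m) := by
  haveI : DecidablePred (fun i : ℕ => c (P ^ i) ≠ P ^ i) := Classical.decPred _
  constructor
  · rintro ⟨⟨h1, h2, h3⟩, h4⟩
    -- the value of c on each power is a power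
    have hval : ∀ i : ℕ, ∃ k, k ≤ i ∧ c (P ^ i) = P ^ k := by
      intro i
      rcases dvr_aux_classify hP (c (P ^ i)) with h0 | ⟨k, hk⟩
      · exact absurd (le_antisymm (h0 ▸ h1 (P ^ i)) bot_le) (by
          simpa [Ideal.zero_eq_bot] using dvr_aux_ne hP i)
      · exact ⟨k, (dvr_aux_le hP).mp (hk ▸ h1 (P ^ i)), hk⟩
    by_cases hid : ∀ i, c (P ^ i) = P ^ i
    · left
      funext I
      rcases dvr_aux_classify hP I with rfl | ⟨n, rfl⟩
      · rcases dvr_aux_classify hP (c 0) with h0 | ⟨k, hk⟩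
        · simpa using h0
        · have hle : c 0 ≤ c (P ^ (k + 1)) := h2 _ _ (by simp [Ideal.zero_eq_bot])
          rw [hk, hid] at hle
          exact absurd ((dvr_aux_le hP).mp hle) (by omega)
      · simpa using hid n
    · right
      push_neg at hid
      set i₀ := Nat.find hid with hi₀def
      have hi₀ : c (P ^ i₀) ≠ P ^ i₀ := Nat.find_spec hid
      have hmin : ∀ i, i < i₀ → c (P ^ i) = P ^ i := by
        intro i hi
        by_contra hcon
        exact Nat.find_min hid hi hcon
      have htop : c (P ^ 0) = P ^ 0 := by
        have := h1 (P ^ 0)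
        simp only [pow_zero, Ideal.one_eq_top] at this ⊢
        exact top_unique this
      have hi₀pos : 0 < i₀ := Nat.pos_of_ne_zero fun h => hi₀ (h ▸ htop)
      set m := i₀ - 1 with hm
      have hi₀m : i₀ = m + 1 := by omega
      -- c (P ^ i₀) = P ^ m
      have hkey : c (P ^ i₀) = P ^ m := by
        obtain ⟨k, hkle, hk⟩ := hval i₀
        have hne : k ≠ i₀ := fun h => hi₀ (by rw [hk, h])
        have hup : c (P ^ i₀) ≤ c (P ^ m) := h2 _ _ ((dvr_aux_le hP).mpr (by omega))
        rw [hk, hmin m (by omega)] at hup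
        have : m ≤ k := (dvr_aux_le hP).mp hup
        have : k = m := by omega
        rw [hk, this]
      have hcm : c (P ^ m) = P ^ m := hmin m (by omega)
      -- c (P ^ i) = P ^ m for all i ≥ m
      have hconst : ∀ i, m ≤ i → c (P ^ i) = P ^ m := by
        intro i hi
        induction i with
        | zero => simpa [show m = 0 by omega] using hcm
        | succ n ih =>
          rcases Nat.lt_or_ge m (n + 1) with hlt | hge
          · rcases Nat.eq_or_lt_of_le (show m ≤ n by omega) with heq | hlt'
            · rw [← heq, ← hi₀m]; exact hkey
            · have hcn : c (P ^ n) = P ^ m := ih (by omega)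
              obtain ⟨t, htle, ht⟩ := hval (n + 1)
              have hup : c (P ^ (n + 1)) ≤ c (P ^ n) :=
                h2 _ _ ((dvr_aux_le hP).mpr (by omega))
              rw [ht, hcn] at hup
              have hmt : m ≤ t := (dvr_aux_le hP).mp hup
              -- semiprime inequality
              have hsp : c (P ^ n) * c (P ^ 1) ≤ c (P ^ (n + 1)) := by
                have := h4 (P ^ n) (P ^ 1)
                rwa [← pow_add] at this
              rcases Nat.eq_zero_or_pos m with hm0 | hmpos
              · -- m = 0 : c (P ^ 1) = P ^ 0 = ⊤
                have hc1 : c (P ^ 1) = P ^ 0 := by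
                  rw [show (1 : ℕ) = i₀ by omega, hkey, hm0]
                rw [hcn, hc1, ht, hm0, ← pow_add] at hsp
                have := (dvr_aux_le hP).mp hsp
                rw [ht]
                congr 1
                omega
              · have hc1 : c (P ^ 1) = P ^ 1 := hmin 1 (by omega)
                rw [hcn, hc1, ht, ← pow_add] at hsp
                have htle' : t ≤ m + 1 := (dvr_aux_le hP).mp hsp
                have htne : t ≠ m + 1 := by
                  intro hteq
                  have hidem := h3 (P ^ (n + 1))
                  rw [ht, hteq, ← hi₀m, hkey, hi₀m] at hidem
                  exact absurd (dvr_aux_inj hP hidem) (by omega)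
                rw [ht]
                congr 1
                omega
          · have : n + 1 = m := by omega
            rw [this, hcm]
      refine ⟨m, fun i hi => hmin i (by omega), hconst, ?_⟩
      -- c 0
      rcases dvr_aux_classify hP (c 0) with h0 | ⟨k, hk⟩
      · exact Or.inl h0
      · have hle : c 0 ≤ c (P ^ m) := h2 _ _ (by simp [Ideal.zero_eq_bot])
        rw [hk, hcm] at hle
        have hmk : m ≤ k := (dvr_aux_le hP).mp hle
        have hidem := h3 0
        rw [hk, hconst k hmk] at hidem
        exact Or.inr (hk.trans hidem.symm)
  · rintro (rfl | ⟨m, hlt, hge, hc0⟩)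
    · exact ⟨⟨fun I => le_rfl, fun I J h => h, fun I => rfl⟩, fun I J => le_rfl⟩
    · have hc : ∀ i, c (P ^ i) = P ^ min i m := by
        intro i
        rcases Nat.lt_or_ge i m with h | h
        · rw [hlt i h]; congr 1; omega
        · rw [hge i h]; congr 1; omega
      refine ⟨⟨?_, ?_, ?_⟩, ?_⟩
      · intro I
        rcases dvr_aux_classify hP I with rfl | ⟨n, rfl⟩
        · simp [Ideal.zero_eq_bot]
        · rw [hc]; exact (dvr_aux_le hP).mpr (by omega)
      · intro I J hIJ
        rcases dvr_aux_classify hP I with rfl | ⟨i, rfl⟩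
        · rcases hc0 with h | h
          · rw [h]; simp [Ideal.zero_eq_bot]
          · rcases dvr_aux_classify hP J with rfl | ⟨j, rfl⟩
            · exact le_rfl
            · rw [h, hc]; exact (dvr_aux_le hP).mpr (by omega)
        · rcases dvr_aux_classify hP J with rfl | ⟨j, rfl⟩
          · exact absurd (le_antisymm (by simpa [Ideal.zero_eq_bot] using hIJ) bot_le)
              (by simpa [Ideal.zero_eq_bot] using dvr_aux_ne hP i)
          · have hji : j ≤ i := (dvr_aux_le hP).mp hIJ
            rw [hc, hc]
            exact (dvr_aux_le hP).mpr (by omega)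
      · intro I
        rcases dvr_aux_classify hP I with rfl | ⟨n, rfl⟩
        · rcases hc0 with h | h
          · rw [h, h]
          · rw [h, hc, Nat.min_self, ← h]
        · rw [hc, hc]; congr 1; omega
      · intro I J
        rcases dvr_aux_classify hP I with rfl | ⟨i, rfl⟩
        · rw [zero_mul]; exact le_trans Ideal.mul_le_left (by rfl)
        · rcases dvr_aux_classify hP J with rfl | ⟨j, rfl⟩
          · rw [mul_zero]; exact le_trans Ideal.mul_le_right (by rfl)
          · rw [hc, hc, ← pow_add, ← pow_add, hc]
            exact (dvr_aux_le hP).mpr (by omega)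
end

section
/- Let (R, P) be a discrete valuation ring. The only prime operation on R is the identity map on the set of ideals of R. -/
theorem dvr_prime_operation_eq_id {R : Type*} [CommRing R] [IsDomain R]
    [IsDiscreteValuationRing R] (c : Ideal R → Ideal R) :
    IsPrimeOperation c ↔ c = id := by
  constructor
  · rintro ⟨⟨⟨hle, hmono, hidem⟩, hsemi⟩, hprime⟩
    have hctop : c ⊤ = ⊤ := top_le_iff.mp (hle ⊤)
    have hbot : c ⊥ = ⊥ := by
      obtain ⟨π, hπ⟩ := IsDiscreteValuationRing.exists_irreducible R
      have hπ0 : π ≠ 0 := hπ.ne_zero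
      have h := hprime π (mem_nonZeroDivisors_of_ne_zero hπ0) ⊥
      rw [Ideal.mul_bot] at h
      obtain ⟨x, hx⟩ := Submodule.IsPrincipal.principal (c ⊥)
      by_contra hne
      have hx0 : x ≠ 0 := by
        rintro rfl
        rw [Submodule.span_zero_singleton] at hx
        exact hne hx
      have hxmem : x ∈ c ⊥ := by
        rw [hx]; exact Submodule.mem_span_singleton_self x
      rw [h, hx] at hxmem
      have hxmem' : x ∈ Ideal.span {π} * Ideal.span {x} := hxmem
      rw [Ideal.span_singleton_mul_span_singleton] at hxmem'
      obtain ⟨r, hr⟩ := Ideal.mem_span_singleton'.mp hxmem'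
      have : (r * π - 1) * x = 0 := by ring_nf; linear_combination hr
      rcases mul_eq_zero.mp this with h1 | h2
      · exact hπ.not_isUnit (IsUnit.of_mul_eq_one (a := π) r (by linear_combination h1))
      · exact hx0 h2
    funext I
    obtain ⟨a, ha⟩ := Submodule.IsPrincipal.principal I
    by_cases ha0 : a = 0
    · subst ha0
      simp only [id_eq]
      rw [ha, Submodule.span_zero_singleton] at *
      exact hbot
    · have h := hprime a (mem_nonZeroDivisors_of_ne_zero ha0) ⊤
      rw [Ideal.mul_top, hctop, Ideal.mul_top] at h
      simp only [id_eq]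
      rw [ha]
      exact h
  · rintro rfl
    exact ⟨⟨⟨fun I => le_refl I, fun I J h => h, fun I => rfl⟩, fun I J => le_refl _⟩,
      fun b hb I => rfl⟩
end

section
/- Let R be a Dedekind domain, let P and Q be distinct maximal ideals of R, and let c be a semiprime operation on R such that there exist m, n with c(P^i) = P^{min(i,m)} for all i ≥ 0 and c(Q^j) = Q^{min(j,n)} for all j ≥ 0. Then c(P^i Q^j) = P^{min(i,m)} Q^{min(j,n)} for all i, j ≥ 0; equivalently, c(P^i Q^j) = c(P^i)·c(Q^j) = c(P^i) ∩ c(Q^j). -/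
theorem dedekind_semiprime_on_products {R : Type*} [CommRing R] [IsDomain R]
    [IsDedekindDomain R] (P Q : Ideal R) (hPmax : P.IsMaximal) (hQmax : Q.IsMaximal)
    (hPQ : P ≠ Q) (c : Ideal R → Ideal R) (hc : IsSemiprimeOperation c)
    (m n : ℕ)
    (hP : ∀ i : ℕ, c (P ^ i) = P ^ min i m)
    (hQ : ∀ j : ℕ, c (Q ^ j) = Q ^ min j n) :
    ∀ i j : ℕ,
      c (P ^ i * Q ^ j) = P ^ min i m * Q ^ min j n ∧
        c (P ^ i * Q ^ j) = c (P ^ i) * c (Q ^ j) ∧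
          c (P ^ i * Q ^ j) = c (P ^ i) ⊓ c (Q ^ j) := by
  obtain ⟨⟨_, hmono, _⟩, hsp⟩ := hc
  have hcop : IsCoprime P Q := by
    rw [Ideal.isCoprime_iff_sup_eq]
    by_contra h
    have h1 : P = P ⊔ Q := hPmax.eq_of_le h le_sup_left
    exact hPQ (hQmax.eq_of_le hPmax.ne_top (le_sup_right.trans h1.ge)).symm
  intro i j
  have hcpow : IsCoprime (P ^ min i m) (Q ^ min j n) := hcop.pow
  have hmul_inf : P ^ min i m * Q ^ min j n = P ^ min i m ⊓ Q ^ min j n :=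
    Ideal.mul_eq_inf_of_coprime hcpow.sup_eq
  have hle1 : c (P ^ i * Q ^ j) ≤ P ^ min i m := by
    rw [← hP i]; exact hmono _ _ Ideal.mul_le_left
  have hle2 : c (P ^ i * Q ^ j) ≤ Q ^ min j n := by
    rw [← hQ j]; exact hmono _ _ Ideal.mul_le_right
  have hge : P ^ min i m * Q ^ min j n ≤ c (P ^ i * Q ^ j) := by
    rw [← hP i, ← hQ j]; exact hsp _ _
  have key : c (P ^ i * Q ^ j) = P ^ min i m * Q ^ min j n :=
    le_antisymm (by rw [hmul_inf]; exact le_inf hle1 hle2) hge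
  refine ⟨key, ?_, ?_⟩
  · rw [key, hP, hQ]
  · rw [key, hP, hQ, hmul_inf]
end

section
/- Let R be a Dedekind domain that is not a field. The only prime operation on R is the identity map on the set of ideals of R. -/
theorem dedekind_prime_operation_eq_id {R : Type*} [CommRing R] [IsDomain R]
    [IsDedekindDomain R] (hR : ¬ IsField R) (c : Ideal R → Ideal R) :
    IsPrimeOperation c ↔ c = id := by
  constructor
  · rintro ⟨⟨⟨hext, hmono, _⟩, hmul⟩, hprime⟩
    have hctop : c ⊤ = ⊤ := top_le_iff.mp (hext ⊤)
    have hspan : ∀ a : R, a ≠ 0 → c (Ideal.span {a}) = Ideal.span {a} := by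
      intro a ha
      have := hprime a (mem_nonZeroDivisors_of_ne_zero ha) ⊤
      rwa [Ideal.mul_top, hctop, Ideal.mul_top] at this
    funext I
    simp only [id]
    by_cases hI : I = ⊥
    · subst hI
      -- show c ⊥ = ⊥
      obtain ⟨b, hb0, hbu⟩ := Ring.exists_not_isUnit_of_not_isField hR
      have h := hprime b (mem_nonZeroDivisors_of_ne_zero hb0) ⊥
      rw [Ideal.mul_bot] at h
      by_contra hne
      have : Ideal.span {b} * c ⊥ = ⊤ * c ⊥ := by rw [Ideal.top_mul, ← h]
      have := mul_right_cancel₀ hne this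
      exact hbu (Ideal.span_singleton_eq_top.mp this)
    · obtain ⟨a, haI, ha0⟩ := Submodule.exists_mem_ne_zero_of_ne_bot hI
      obtain ⟨J, hJ⟩ : I ∣ Ideal.span {a} :=
        Ideal.dvd_iff_le.mpr ((Ideal.span_singleton_le_iff_mem I).mpr haI)
      have h1 : c I * J ≤ Ideal.span {a} := by
        calc c I * J ≤ c I * c J := mul_le_mul_right (hext J) _
        _ ≤ c (I * J) := hmul I J
        _ = Ideal.span {a} := by rw [← hJ]; exact hspan a ha0
      have h2 : Ideal.span {a} * c I ≤ Ideal.span {a} * I := by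
        calc Ideal.span {a} * c I = I * (c I * J) := by rw [hJ]; ring
        _ ≤ I * Ideal.span {a} := mul_le_mul_right h1 I
        _ = Ideal.span {a} * I := mul_comm _ _
      refine le_antisymm ?_ (hext I)
      intro x hx
      have : a * x ∈ Ideal.span {a} * I := h2 (Ideal.mul_mem_mul (Ideal.mem_span_singleton_self a) hx)
      rw [Ideal.mem_span_singleton_mul] at this
      obtain ⟨y, hy, hxy⟩ := this
      have hxy2 : x = y := mul_left_cancel₀ ha0 hxy.symm
      rwa [hxy2]
  · rintro rfl
    refine ⟨⟨⟨fun I => le_rfl, fun I J h => h, fun I => rfl⟩, fun I J => le_rfl⟩, fun b hb I => rfl⟩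
end

section
/- Let K be a field, R = K[[t^2, t^3]], and fix an integer i ≥ 2. Define the map c on the ideals of R by c(I) = M_i if I = P_{i,a} for some a ∈ K, and c(I) = I for every other ideal I. Then c is a closure operation on R but c is not a semiprime operation. -/
open PowerSeries

/-- A (semiprime) operation is bounded if there is a nonzero proper ideal `J`
such that `c I = J` for every nonzero ideal `I ⊆ J`. -/
def IsBoundedOperation {R : Type*} [CommRing R] (c : Ideal R → Ideal R) : Prop :=
  ∃ J : Ideal R, J ≠ ⊥ ∧ J ≠ ⊤ ∧ ∀ I : Ideal R, I ≠ ⊥ → I ≤ J → c I = J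

/-- The ring `K[[t^2, t^3]]`: power series over `K` with vanishing linear coefficient. -/
def cuspRing (K : Type*) [Field K] : Subring (PowerSeries K) where
  carrier := {f | PowerSeries.coeff (R := K) 1 f = 0}
  zero_mem' := by simp
  one_mem' := by simp
  add_mem' := by
    intro a b ha hb
    simp only [Set.mem_setOf_eq, map_add] at *
    rw [ha, hb, add_zero]
  neg_mem' := by
    intro a ha
    simp only [Set.mem_setOf_eq, map_neg] at *
    rw [ha, neg_zero]
  mul_mem' := by
    intro a b ha hb
    simp only [Set.mem_setOf_eq] at *
    rw [PowerSeries.coeff_mul]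
    rw [Finset.Nat.sum_antidiagonal_eq_sum_range_succ_mk]
    simp [Finset.sum_range_succ, ha, hb]

/-- The principal ideal `P_{n,a} = (t^n + a t^{n+1})` of `K[[t^2,t^3]]`. -/
noncomputable def Pgen (K : Type*) [Field K] (n : ℕ) (a : K) : Ideal (cuspRing K) :=
  Ideal.span {x : cuspRing K |
    (x : PowerSeries K) = X ^ n + PowerSeries.C (R := K) a * X ^ (n + 1)}

/-- The two-generated ideal `M_n = (t^n, t^{n+1})` of `K[[t^2,t^3]]`. -/
noncomputable def Mgen (K : Type*) [Field K] (n : ℕ) : Ideal (cuspRing K) :=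
  Ideal.span {x : cuspRing K |
    (x : PowerSeries K) = X ^ n ∨ (x : PowerSeries K) = X ^ (n + 1)}

section Helpers

variable {K : Type*} [Field K]

lemma mem_cuspRing_iff {f : PowerSeries K} : f ∈ cuspRing K ↔ PowerSeries.coeff (R := K) 1 f = 0 :=
  Iff.rfl

lemma Xpow_mem {n : ℕ} (hn : n ≠ 1) : (X ^ n : PowerSeries K) ∈ cuspRing K := by
  simp [mem_cuspRing_iff, coeff_X_pow, Ne.symm hn]

lemma C_mem (a : K) : (PowerSeries.C (R := K) a : PowerSeries K) ∈ cuspRing K := by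
  simp [mem_cuspRing_iff, coeff_C]

lemma pa_mem {n : ℕ} (hn : 2 ≤ n) (a : K) :
    (X ^ n + PowerSeries.C (R := K) a * X ^ (n + 1) : PowerSeries K) ∈ cuspRing K := by
  have h1 : (1 : ℕ) ≠ n := by omega
  have h2 : (1 : ℕ) ≠ n + 1 := by omega
  simp [mem_cuspRing_iff, coeff_X_pow, coeff_C_mul, h1, h2]
  intro h0
  exact absurd h0 (by omega)

lemma Pgen_eq (n : ℕ) (hn : 2 ≤ n) (a : K) :
    Pgen K n a = Ideal.span
      {(⟨X ^ n + PowerSeries.C (R := K) a * X ^ (n + 1), pa_mem hn a⟩ : cuspRing K)} := by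
  unfold Pgen
  congr 1
  ext x
  simp [Subtype.ext_iff]

lemma mem_Pgen_iff {n : ℕ} (hn : 2 ≤ n) (a : K) (x : cuspRing K) :
    x ∈ Pgen K n a ↔ ∃ r : cuspRing K,
      (r : PowerSeries K) * (X ^ n + PowerSeries.C (R := K) a * X ^ (n + 1))
        = (x : PowerSeries K) := by
  rw [Pgen_eq n hn a, Ideal.mem_span_singleton']
  constructor
  · rintro ⟨r, hr⟩
    exact ⟨r, by rw [← hr]; rfl⟩
  · rintro ⟨r, hr⟩
    exact ⟨r, Subtype.ext hr⟩


lemma coeff_of_mem_Pgen {n : ℕ} (hn : 2 ≤ n) {a : K} {x : cuspRing K}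
    (hx : x ∈ Pgen K n a) :
    (∀ k < n, PowerSeries.coeff (R := K) k (x : PowerSeries K) = 0) ∧
      PowerSeries.coeff (R := K) (n + 1) (x : PowerSeries K)
        = a * PowerSeries.coeff (R := K) n (x : PowerSeries K) := by
  obtain ⟨r, hr⟩ := (mem_Pgen_iff hn a x).mp hx
  have hr1 : PowerSeries.coeff (R := K) 1 (r : PowerSeries K) = 0 := r.2
  have expand : (r : PowerSeries K) * (X ^ n + PowerSeries.C (R := K) a * X ^ (n + 1))
      = (r : PowerSeries K) * X ^ n
        + PowerSeries.C (R := K) a * ((r : PowerSeries K) * X ^ (n + 1)) := by ring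
  rw [expand] at hr
  have hco : ∀ k : ℕ, PowerSeries.coeff (R := K) k (x : PowerSeries K)
      = (if n ≤ k then PowerSeries.coeff (R := K) (k - n) (r : PowerSeries K) else 0)
        + a * (if n + 1 ≤ k then PowerSeries.coeff (R := K) (k - (n + 1)) (r : PowerSeries K) else 0) := by
    intro k
    rw [← hr, map_add, coeff_C_mul, coeff_mul_X_pow', coeff_mul_X_pow']
  constructor
  · intro k hk
    rw [hco k, if_neg (by omega), if_neg (by omega), mul_zero, add_zero]
  · have e1 : n + 1 - n = 1 := by omega
    have e2 : n + 1 - (n + 1) = 0 := by omega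
    have e3 : n - n = 0 := by omega
    rw [hco (n + 1), hco n, if_pos (by omega), if_pos (by omega), if_pos le_rfl,
      if_neg (by omega), e1, e2, e3, hr1, zero_add, mul_zero, add_zero]

lemma mem_Pgen_of {n : ℕ} (hn : 2 ≤ n) {a : K} {x : cuspRing K}
    (h0 : ∀ k < n, PowerSeries.coeff (R := K) k (x : PowerSeries K) = 0)
    (h1 : PowerSeries.coeff (R := K) (n + 1) (x : PowerSeries K)
      = a * PowerSeries.coeff (R := K) n (x : PowerSeries K)) :
    x ∈ Pgen K n a := by
  set v : PowerSeries K := PowerSeries.invOfUnit (1 + PowerSeries.C (R := K) a * X) 1 with hvdef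
  have hunit : PowerSeries.constantCoeff (R := K) (1 + PowerSeries.C (R := K) a * X) = ((1 : Kˣ) : K) := by
    simp
  have hmul : (1 + PowerSeries.C (R := K) a * X) * v = 1 := PowerSeries.mul_invOfUnit _ 1 hunit
  have hv0 : PowerSeries.coeff (R := K) 0 v = 1 := by
    have h := congrArg (PowerSeries.constantCoeff (R := K)) hmul
    rw [map_mul, hunit] at h
    simpa [PowerSeries.coeff_zero_eq_constantCoeff] using h
  have hv1 : PowerSeries.coeff (R := K) 1 v = -a := by
    have h := congrArg (PowerSeries.coeff (R := K) 1) hmul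
    rw [PowerSeries.coeff_mul, Finset.Nat.sum_antidiagonal_eq_sum_range_succ_mk] at h
    simp [Finset.sum_range_succ, PowerSeries.coeff_one, coeff_C_mul, PowerSeries.coeff_X,
      coeff_C, hv0] at h
    linear_combination h
  obtain ⟨u, hu⟩ := PowerSeries.X_pow_dvd_iff.mpr h0
  have hu0 : PowerSeries.coeff (R := K) 0 u = PowerSeries.coeff (R := K) n (x : PowerSeries K) := by
    have h := PowerSeries.coeff_X_pow_mul u n 0
    rw [zero_add] at h
    rw [hu, h]
  have hu1 : PowerSeries.coeff (R := K) 1 u = PowerSeries.coeff (R := K) (n + 1) (x : PowerSeries K) := by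
    have h := PowerSeries.coeff_X_pow_mul u n 1
    rw [add_comm 1 n] at h
    rw [hu, h]
  have hq1 : PowerSeries.coeff (R := K) 1 (u * v) = 0 := by
    rw [PowerSeries.coeff_mul, Finset.Nat.sum_antidiagonal_eq_sum_range_succ_mk]
    simp [Finset.sum_range_succ, hv0, hv1, hu0, hu1, h1]
    ring
  refine (mem_Pgen_iff hn a x).mpr ⟨⟨u * v, hq1⟩, ?_⟩
  have key : (u * v) * (X ^ n + PowerSeries.C (R := K) a * X ^ (n + 1))
      = (X ^ n * u) * ((1 + PowerSeries.C (R := K) a * X) * v) := by ring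
  rw [key, hmul, mul_one, ← hu]


lemma Mgen_eq (n : ℕ) (hn : 2 ≤ n) :
    Mgen K n = Ideal.span
      {(⟨X ^ n, Xpow_mem (by omega)⟩ : cuspRing K),
        (⟨X ^ (n + 1), Xpow_mem (by omega)⟩ : cuspRing K)} := by
  unfold Mgen
  congr 1
  ext x
  simp [Subtype.ext_iff]

lemma mem_Mgen_iff {n : ℕ} (hn : 2 ≤ n) (x : cuspRing K) :
    x ∈ Mgen K n ↔ ∃ r s : cuspRing K,
      (r : PowerSeries K) * X ^ n + (s : PowerSeries K) * X ^ (n + 1)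
        = (x : PowerSeries K) := by
  rw [Mgen_eq n hn, Ideal.mem_span_pair]
  constructor
  · rintro ⟨r, s, hrs⟩
    exact ⟨r, s, by rw [← hrs]; rfl⟩
  · rintro ⟨r, s, hrs⟩
    exact ⟨r, s, Subtype.ext hrs⟩

lemma mem_Mgen_of {n : ℕ} (hn : 2 ≤ n) {x : cuspRing K}
    (h : ∀ k < n, PowerSeries.coeff (R := K) k (x : PowerSeries K) = 0) :
    x ∈ Mgen K n := by
  obtain ⟨u, hu⟩ := PowerSeries.X_pow_dvd_iff.mpr h
  set u1 : K := PowerSeries.coeff (R := K) 1 u with hu1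
  have hr1 : PowerSeries.coeff (R := K) 1 (u - PowerSeries.C (R := K) u1 * X) = 0 := by
    simp [coeff_C_mul, PowerSeries.coeff_X]
    rw [hu1, sub_self]
  have hs1 : PowerSeries.coeff (R := K) 1 (PowerSeries.C (R := K) u1 : PowerSeries K) = 0 := by
    simp [coeff_C]
  refine (mem_Mgen_iff hn x).mpr
    ⟨⟨u - PowerSeries.C (R := K) u1 * X, hr1⟩, ⟨PowerSeries.C (R := K) u1, hs1⟩, ?_⟩
  rw [hu]
  ring


lemma Pgen_le_Mgen {i : ℕ} (hi : 2 ≤ i) (a : K) : Pgen K i a ≤ Mgen K i := by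
  rw [Pgen, Ideal.span_le]
  intro x hx
  have hx' : (x : PowerSeries K) = X ^ i + PowerSeries.C (R := K) a * X ^ (i + 1) := hx
  apply mem_Mgen_of hi
  intro k hk
  have h1 : k ≠ i := by omega
  have h2 : k ≠ i + 1 := by omega
  rw [hx']
  simp [coeff_X_pow, coeff_C_mul, h1, h2]

lemma X_pow_succ_not_mem_Pgen {i : ℕ} (hi : 2 ≤ i) (b : K) :
    (⟨X ^ (i + 1), Xpow_mem (by omega)⟩ : cuspRing K) ∉ Pgen K i b := by
  intro hmem
  have h := (coeff_of_mem_Pgen hi hmem).2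
  have h1 : i ≠ i + 1 := by omega
  simp [coeff_X_pow, h1] at h

lemma Mgen_le_of {i : ℕ} (hi : 2 ≤ i) (a : K) (J : Ideal (cuspRing K))
    (hPJ : Pgen K i a ≤ J) (g : cuspRing K) (hgJ : g ∈ J) (hgP : g ∉ Pgen K i a) :
    Mgen K i ≤ J := by
  set pelem : cuspRing K := ⟨X ^ i + PowerSeries.C (R := K) a * X ^ (i + 1), pa_mem hi a⟩ with hpelem
  have hpJ : pelem ∈ J := hPJ (Ideal.subset_span rfl)
  -- Step 1: find h ∈ J vanishing up to degree i with nonzero coefficient at i+1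
  have hstep : ∃ h : cuspRing K, h ∈ J ∧
      (∀ k ≤ i, PowerSeries.coeff (R := K) k (h : PowerSeries K) = 0) ∧
      PowerSeries.coeff (R := K) (i + 1) (h : PowerSeries K) ≠ 0 := by
    by_cases hA : ∀ k < i, PowerSeries.coeff (R := K) k (g : PowerSeries K) = 0
    · have hB : PowerSeries.coeff (R := K) (i + 1) (g : PowerSeries K)
          ≠ a * PowerSeries.coeff (R := K) i (g : PowerSeries K) :=
        fun hB => hgP (mem_Pgen_of hi hA hB)
      set ci : K := PowerSeries.coeff (R := K) i (g : PowerSeries K) with hci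
      set cci : cuspRing K := ⟨PowerSeries.C (R := K) ci, C_mem ci⟩ with hcci
      refine ⟨g - cci * pelem, J.sub_mem hgJ (J.mul_mem_left cci hpJ), ?_, ?_⟩
      · intro k hk
        have hco : ((g - cci * pelem : cuspRing K) : PowerSeries K)
            = (g : PowerSeries K)
              - PowerSeries.C (R := K) ci * (X ^ i + PowerSeries.C (R := K) a * X ^ (i + 1)) := rfl
        rcases lt_or_eq_of_le hk with hlt | heq
        · have h1 : k ≠ i := by omega
          have h2 : k ≠ i + 1 := by omega
          rw [hco]
          simp [coeff_X_pow, coeff_C_mul, h1, h2, hA k hlt]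
        · subst heq
          have h2 : k ≠ k + 1 := by omega
          have hco2 : ((g - cci * pelem : cuspRing K) : PowerSeries K)
              = (g : PowerSeries K)
                - PowerSeries.C (R := K) ci * (X ^ k + PowerSeries.C (R := K) a * X ^ (k + 1)) := rfl
          rw [hco2]
          simp [coeff_X_pow, coeff_C_mul, h2, hci]
      · have hco : ((g - cci * pelem : cuspRing K) : PowerSeries K)
            = (g : PowerSeries K)
              - PowerSeries.C (R := K) ci * (X ^ i + PowerSeries.C (R := K) a * X ^ (i + 1)) := rfl
        have h1 : i + 1 ≠ i := by omega
        rw [hco]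
        simp only [map_sub, coeff_C_mul, map_add, coeff_X_pow, if_neg h1, if_pos rfl,
          zero_add, mul_one]
        simp only [if_true, mul_one]
        intro hzero
        apply hB
        linear_combination hzero
    · push_neg at hA
      obtain ⟨k0, hk0i, hk0⟩ := hA
      classical
      have hex : ∃ k, PowerSeries.coeff (R := K) k (g : PowerSeries K) ≠ 0 := ⟨k0, hk0⟩
      set m : ℕ := Nat.find hex with hm
      have hmspec : PowerSeries.coeff (R := K) m (g : PowerSeries K) ≠ 0 := Nat.find_spec hex
      have hmle : m ≤ k0 := Nat.find_min' hex hk0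
      have hmi : m < i := lt_of_le_of_lt hmle hk0i
      have hmin : ∀ j < m, PowerSeries.coeff (R := K) j (g : PowerSeries K) = 0 := by
        intro j hj
        rw [hm] at hj
        exact not_not.mp (Nat.find_min hex hj)
      set e : ℕ := i + 1 - m with he
      have he1 : e ≠ 1 := by omega
      set telt : cuspRing K := ⟨X ^ e, Xpow_mem he1⟩ with htelt
      refine ⟨telt * g, J.mul_mem_left telt hgJ, ?_, ?_⟩
      · intro k hk
        have hco : ((telt * g : cuspRing K) : PowerSeries K)
            = X ^ e * (g : PowerSeries K) := rfl
        rw [hco, PowerSeries.coeff_X_pow_mul']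
        split_ifs with hle
        · exact hmin (k - e) (by omega)
        · rfl
      · have hco : ((telt * g : cuspRing K) : PowerSeries K)
            = X ^ e * (g : PowerSeries K) := rfl
        rw [hco, PowerSeries.coeff_X_pow_mul', if_pos (by omega)]
        have : i + 1 - e = m := by omega
        rw [this]
        exact hmspec
  obtain ⟨h, hhJ, hlow, hne⟩ := hstep
  -- Step 2: t^{i+1} ∈ J
  set mu : K := PowerSeries.coeff (R := K) (i + 1) (h : PowerSeries K) with hmu
  set cinv : cuspRing K := ⟨PowerSeries.C (R := K) mu⁻¹, C_mem _⟩ with hcinv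
  set tI1 : cuspRing K := ⟨X ^ (i + 1), Xpow_mem (by omega)⟩ with htI1
  have hyJ : cinv * h ∈ J := J.mul_mem_left cinv hhJ
  have hcoy : ((cinv * h - tI1 : cuspRing K) : PowerSeries K)
      = PowerSeries.C (R := K) mu⁻¹ * (h : PowerSeries K) - X ^ (i + 1) := rfl
  have hy'P : cinv * h - tI1 ∈ Pgen K i a := by
    apply mem_Pgen_of hi
    · intro k hk
      have h2 : k ≠ i + 1 := by omega
      rw [hcoy]
      simp [coeff_C_mul, coeff_X_pow, h2, hlow k (le_of_lt hk)]
    · have h1 : i ≠ i + 1 := by omega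
      rw [hcoy]
      simp [coeff_C_mul, coeff_X_pow, h1, hlow i le_rfl, inv_mul_cancel₀ hne]
      rw [← hmu, inv_mul_cancel₀ hne, sub_self]
  have htI1J : tI1 ∈ J := by
    have hsub := J.sub_mem hyJ (hPJ hy'P)
    simpa [sub_sub_cancel] using hsub
  -- Step 3: t^i ∈ J
  set ca : cuspRing K := ⟨PowerSeries.C (R := K) a, C_mem a⟩ with hca
  set tI : cuspRing K := ⟨X ^ i, Xpow_mem (by omega)⟩ with htI
  have htIJ : tI ∈ J := by
    have hsub := J.sub_mem hpJ (J.mul_mem_left ca htI1J)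
    have heq : pelem - ca * tI1 = tI := by
      apply Subtype.ext
      show (X ^ i + PowerSeries.C (R := K) a * X ^ (i + 1))
        - PowerSeries.C (R := K) a * X ^ (i + 1) = X ^ i
      ring
    rwa [heq] at hsub
  -- Step 4
  rw [Mgen, Ideal.span_le]
  intro x hx
  rcases hx with hx | hx
  · have : x = tI := Subtype.ext hx
    rw [this]; exact htIJ
  · have : x = tI1 := Subtype.ext hx
    rw [this]; exact htI1J

end Helpers

set_option synthInstance.maxHeartbeats 1000000 in
set_option maxHeartbeats 1000000 in
theorem cusp_closure_not_semiprime {K : Type*} [Field K] (i : ℕ) (hi : 2 ≤ i)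
    (c : Ideal (cuspRing K) → Ideal (cuspRing K))
    (h1 : ∀ a : K, c (Pgen K i a) = Mgen K i)
    (h2 : ∀ I : Ideal (cuspRing K), (¬ ∃ a : K, I = Pgen K i a) → c I = I) :
    IsClosureOperation c ∧ ¬ IsSemiprimeOperation c := by
  classical
  have hne1 : ∀ b : K, ¬ (Mgen K i = Pgen K i b) := by
    intro b hb
    have hmem : (⟨X ^ (i + 1), Xpow_mem (by omega)⟩ : cuspRing K) ∈ Mgen K i :=
      Ideal.subset_span (Or.inr rfl)
    rw [hb] at hmem
    exact X_pow_succ_not_mem_Pgen hi b hmem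
  have cext : ∀ I : Ideal (cuspRing K), I ≤ c I := by
    intro I
    by_cases hI : ∃ a : K, I = Pgen K i a
    · obtain ⟨a, rfl⟩ := hI
      rw [h1 a]
      exact Pgen_le_Mgen hi a
    · rw [h2 I hI]
  refine ⟨⟨cext, ?_, ?_⟩, ?_⟩
  · intro I J hIJ
    by_cases hI : ∃ a : K, I = Pgen K i a
    · obtain ⟨a, rfl⟩ := hI
      rw [h1 a]
      by_cases hJ : ∃ b : K, J = Pgen K i b
      · obtain ⟨b, rfl⟩ := hJ
        rw [h1 b]
      · rw [h2 J hJ]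
        have hneJ : ¬ J ≤ Pgen K i a := by
          intro hle
          exact hJ ⟨a, le_antisymm hle hIJ⟩
        obtain ⟨g, hgJ, hgP⟩ := SetLike.not_le_iff_exists.mp hneJ
        exact Mgen_le_of hi a J hIJ g hgJ hgP
    · rw [h2 I hI]
      exact le_trans hIJ (cext J)
  · intro I
    by_cases hI : ∃ a : K, I = Pgen K i a
    · obtain ⟨a, rfl⟩ := hI
      rw [h1 a]
      exact h2 _ (fun ⟨b, hb⟩ => hne1 b hb)
    · rw [h2 I hI, h2 I hI]
  · rintro ⟨-, hmul⟩
    have hMM := hmul (Pgen K i 0) (Pgen K i 0)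
    rw [h1 0] at hMM
    set tI : cuspRing K := ⟨X ^ i, Xpow_mem (by omega)⟩ with htI
    set tI1 : cuspRing K := ⟨X ^ (i + 1), Xpow_mem (by omega)⟩ with htI1
    set t2I : cuspRing K := ⟨X ^ (i + i), Xpow_mem (by omega)⟩ with ht2I
    set t2I1 : cuspRing K := ⟨X ^ (i + i + 1), Xpow_mem (by omega)⟩ with ht2I1
    have helem : (⟨X ^ i + PowerSeries.C (R := K) 0 * X ^ (i + 1), pa_mem hi 0⟩ : cuspRing K) = tI :=
      Subtype.ext (by simp; rfl)
    have hP0 : Pgen K i 0 = Ideal.span {tI} := by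
      rw [Pgen_eq i hi 0, helem]
    have helem2 : tI * tI = t2I := Subtype.ext (by
      show (X ^ i : PowerSeries K) * X ^ i = X ^ (i + i)
      rw [← pow_add])
    have hPP : Pgen K i 0 * Pgen K i 0 = Ideal.span {t2I} := by
      rw [hP0, Ideal.span_singleton_mul_span_singleton, helem2]
    have hQnotP : ¬ ∃ b : K, Ideal.span {t2I} = Pgen K i b := by
      rintro ⟨b, hb⟩
      have hpb : (⟨X ^ i + PowerSeries.C (R := K) b * X ^ (i + 1), pa_mem hi b⟩ : cuspRing K)
          ∈ Pgen K i b := Ideal.subset_span rfl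
      rw [← hb, Ideal.mem_span_singleton'] at hpb
      obtain ⟨r, hr⟩ := hpb
      have hr' : (r : PowerSeries K) * X ^ (i + i)
          = X ^ i + PowerSeries.C (R := K) b * X ^ (i + 1) := congrArg Subtype.val hr
      have hc := congrArg (PowerSeries.coeff (R := K) i) hr'
      rw [PowerSeries.coeff_mul_X_pow', if_neg (by omega)] at hc
      have h1i : i ≠ i + 1 := by omega
      simp [coeff_X_pow, coeff_C_mul, h1i] at hc
    rw [hPP, h2 _ hQnotP] at hMM
    have hmm : t2I1 ∈ Mgen K i * Mgen K i := by
      have h1m : tI ∈ Mgen K i := Ideal.subset_span (Or.inl rfl)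
      have h2m : tI1 ∈ Mgen K i := Ideal.subset_span (Or.inr rfl)
      have hmul2 := Ideal.mul_mem_mul h1m h2m
      have heq : tI * tI1 = t2I1 := Subtype.ext (by
        show (X ^ i : PowerSeries K) * X ^ (i + 1) = X ^ (i + i + 1)
        rw [← pow_add]
        congr 1)
      rwa [heq] at hmul2
    have hfin := hMM hmm
    rw [Ideal.mem_span_singleton'] at hfin
    obtain ⟨r, hr⟩ := hfin
    have hr' : (r : PowerSeries K) * X ^ (i + i) = X ^ (i + i + 1) := congrArg Subtype.val hr
    have hc := congrArg (PowerSeries.coeff (R := K) (i + i + 1)) hr'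
    rw [PowerSeries.coeff_mul_X_pow', if_pos (by omega)] at hc
    have he : i + i + 1 - (i + i) = 1 := by omega
    rw [he, r.2] at hc
    have hii : i + i + 1 = i + i + 1 := rfl
    simp [coeff_X_pow] at hc
end

section
/- Let K be a field and R = K[[t^2, t^3]]. The only prime operation on R is the identity map on the set of ideals of R. -/
open PowerSeries

namespace CuspAux
open PowerSeries
variable {K : Type*} [Field K]

lemma coe_coeff_one (x : cuspRing K) : coeff (R := K) 1 (x : PowerSeries K) = 0 := x.2

/-- constant as element of the cusp ring -/
noncomputable def cE (a : K) : cuspRing K :=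
  ⟨C (R := K) a, show coeff (R := K) 1 (C (R := K) a) = 0 by simp [PowerSeries.coeff_C]⟩

@[simp] lemma cE_coe (a : K) : ((cE a : cuspRing K) : PowerSeries K) = C (R := K) a := rfl

/-- X^n as element of the cusp ring, n ≠ 1 -/
noncomputable def xE (n : ℕ) (hn : n ≠ 1) : cuspRing K :=
  ⟨X ^ n, show coeff (R := K) 1 (X ^ n : PowerSeries K) = 0 by
    simp [PowerSeries.coeff_X_pow, Ne.symm hn]⟩

@[simp] lemma xE_coe (n : ℕ) (hn : n ≠ 1) : ((xE n hn : cuspRing K) : PowerSeries K) = X ^ n := rfl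

lemma xE_ne_zero (n : ℕ) (hn : n ≠ 1) : (xE n hn : cuspRing K) ≠ 0 := fun h =>
  pow_ne_zero n (PowerSeries.X_ne_zero (R := K)) (by simpa using congrArg Subtype.val h)

noncomputable def geom (a : K) : PowerSeries K := PowerSeries.mk fun i => (-a) ^ i

lemma one_add_mul_geom (a : K) : (1 + C (R := K) a * X) * geom a = 1 := by
  ext n
  rw [add_mul, one_mul, mul_assoc, map_add]
  cases n with
  | zero => simp [geom]
  | succ n =>
    rw [PowerSeries.coeff_C_mul, PowerSeries.coeff_succ_X_mul]
    simp only [geom, PowerSeries.coeff_mk, PowerSeries.coeff_one, Nat.succ_ne_zero, if_false]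
    rw [pow_succ]
    ring

lemma eq_X_pow_mul_shift {f : PowerSeries K} {n : ℕ} (h : ∀ i < n, coeff (R := K) i f = 0) :
    f = X ^ n * PowerSeries.mk fun i => coeff (R := K) (n + i) f := by
  ext m
  rcases Nat.lt_or_ge m n with hm | hm
  · rw [h m hm]
    exact ((PowerSeries.X_pow_dvd_iff.mp (dvd_mul_right _ _)) m hm).symm
  · obtain ⟨d, rfl⟩ : ∃ d, m = d + n := ⟨m - n, by omega⟩
    rw [PowerSeries.coeff_X_pow_mul]
    simp [Nat.add_comm]

lemma coeff_mul_zero (f g : PowerSeries K) :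
    coeff (R := K) 0 (f * g) = coeff (R := K) 0 f * coeff (R := K) 0 g := by
  simp [PowerSeries.coeff_mul]

lemma coeff_mul_one' (f g : PowerSeries K) :
    coeff (R := K) 1 (f * g) = coeff (R := K) 0 f * coeff (R := K) 1 g + coeff (R := K) 1 f * coeff (R := K) 0 g := by
  rw [PowerSeries.coeff_mul, Finset.Nat.sum_antidiagonal_eq_sum_range_succ_mk]
  simp [Finset.sum_range_succ]

end CuspAux

namespace CuspAux
open PowerSeries
variable {K : Type*} [Field K]

/-- the ideal of elements divisible by X^n -/
def divIdeal (n : ℕ) : Ideal (cuspRing K) where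
  carrier := {x | (X : PowerSeries K) ^ n ∣ (x : PowerSeries K)}
  add_mem' := by
    intro a b ha hb
    simp only [Set.mem_setOf_eq] at *
    push_cast
    exact dvd_add ha hb
  zero_mem' := by simp
  smul_mem' := by
    intro r x hx
    simp only [Set.mem_setOf_eq, smul_eq_mul] at *
    push_cast
    exact hx.mul_left _

lemma mem_Mgen_iff {n : ℕ} (hn : 2 ≤ n) (f : cuspRing K) :
    f ∈ Mgen K n ↔ (X : PowerSeries K) ^ n ∣ (f : PowerSeries K) := by
  constructor
  · intro hf
    have : Mgen K n ≤ divIdeal n := by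
      rw [Mgen, Ideal.span_le]
      rintro y (hy | hy)
      · show (X : PowerSeries K) ^ n ∣ (y : PowerSeries K)
        rw [hy]
      · show (X : PowerSeries K) ^ n ∣ (y : PowerSeries K)
        rw [hy]
        exact pow_dvd_pow _ (by omega)
    exact this hf
  · intro hdvd
    obtain ⟨g, hg⟩ := hdvd
    have hgdec : g = C (R := K) (coeff (R := K) 0 g) + X ^ 2 * PowerSeries.mk (fun i => coeff (R := K) (2 + i) g)
        + C (R := K) (coeff (R := K) 1 g) * X := by
      ext m
      match m with
      | 0 => simp
      | 1 =>
        have h1 : coeff (R := K) 1 (X ^ 2 * PowerSeries.mk fun i => coeff (R := K) (2 + i) g) = 0 :=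
          PowerSeries.X_pow_dvd_iff.mp (dvd_mul_right _ _) 1 (by omega)
        simp [h1, PowerSeries.coeff_X_pow, PowerSeries.coeff_C]
      | m + 2 =>
        simp only [map_add, PowerSeries.coeff_C, PowerSeries.coeff_C_mul]
        rw [show m + 2 = m + 2 from rfl]
        have h1 : coeff (R := K) (m + 2) (X ^ 2 * PowerSeries.mk fun i => coeff (R := K) (2 + i) g)
            = coeff (R := K) (2 + m) g := by
          rw [show m + 2 = m + 2 from rfl, PowerSeries.coeff_X_pow_mul]
          simp
        rw [h1]
        have h2 : coeff (R := K) (m + 2) (X : PowerSeries K) = 0 := by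
          simp [PowerSeries.coeff_X]
        rw [h2]
        simp [Nat.add_comm]
    -- f = r1 * X^n + r2 * X^(n+1)
    set r1 : cuspRing K := ⟨C (R := K) (coeff (R := K) 0 g) + X ^ 2 * PowerSeries.mk (fun i => coeff (R := K) (2 + i) g),
      show coeff (R := K) 1 _ = 0 by
        rw [map_add]
        have : coeff (R := K) 1 (X ^ 2 * PowerSeries.mk fun i => coeff (R := K) (2 + i) g) = 0 :=
          PowerSeries.X_pow_dvd_iff.mp (dvd_mul_right _ _) 1 (by omega)
        simp [this, PowerSeries.coeff_C]⟩ with hr1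
    have key : f = r1 * xE n (by omega) + cE (coeff (R := K) 1 g) * xE (n + 1) (by omega) := by
      apply Subtype.ext
      push_cast
      rw [hg]
      nth_rewrite 1 [hgdec]
      simp only [hr1, cE_coe, xE_coe]
      ring
    rw [key]
    have hx1 : (xE n (by omega) : cuspRing K) ∈ Mgen K n :=
      Ideal.subset_span (Or.inl (by simp))
    have hx2 : (xE (n+1) (by omega) : cuspRing K) ∈ Mgen K n :=
      Ideal.subset_span (Or.inr (by simp))
    exact Ideal.add_mem _ (Ideal.mul_mem_left _ _ hx1) (Ideal.mul_mem_left _ _ hx2)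

lemma X_pow_dvd_X_pow_iff {n m : ℕ} : (X : PowerSeries K) ^ n ∣ X ^ m ↔ n ≤ m := by
  constructor
  · intro h
    by_contra hc
    have := PowerSeries.X_pow_dvd_iff.mp h m (by omega)
    rw [PowerSeries.coeff_X_pow] at this
    simp at this
  · exact pow_dvd_pow _

lemma xE_mem_Mgen_iff {n m : ℕ} (hn : 2 ≤ n) (hm : m ≠ 1) :
    (xE m hm : cuspRing K) ∈ Mgen K n ↔ n ≤ m := by
  rw [mem_Mgen_iff hn, xE_coe, X_pow_dvd_X_pow_iff]

lemma Mgen_mono {n m : ℕ} (hn : 2 ≤ n) (hnm : n ≤ m) : Mgen K m ≤ Mgen K n := by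
  intro f hf
  rw [mem_Mgen_iff hn]
  rw [mem_Mgen_iff (by omega)] at hf
  exact dvd_trans (pow_dvd_pow _ hnm) hf

lemma Mgen_ne_bot {n : ℕ} (hn : 2 ≤ n) : Mgen K n ≠ ⊥ := by
  intro h
  have : (xE n (by omega) : cuspRing K) ∈ Mgen K n :=
    Ideal.subset_span (Or.inl (by simp))
  rw [h, Ideal.mem_bot] at this
  exact xE_ne_zero n (by omega) this

lemma Mgen_inj {n m : ℕ} (hn : 2 ≤ n) (hm : 2 ≤ m) (h : Mgen K n = Mgen K m) : n = m := by
  have e1 : (xE n (show n ≠ 1 by omega) : cuspRing K) ∈ Mgen K m := by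
    rw [← h]; exact Ideal.subset_span (Or.inl (by simp))
  have e2 : (xE m (show m ≠ 1 by omega) : cuspRing K) ∈ Mgen K n := by
    rw [h]; exact Ideal.subset_span (Or.inl (by simp))
  have h1 := (xE_mem_Mgen_iff hm (show n ≠ 1 by omega)).mp e1
  have h2 := (xE_mem_Mgen_iff hn (show m ≠ 1 by omega)).mp e2
  omega

end CuspAux

namespace CuspAux
open PowerSeries
variable {K : Type*} [Field K]

lemma mem_span_singleton_iff {x : cuspRing K} {n : ℕ} (hn : 2 ≤ n)
    (h0 : ∀ i < n, coeff (R := K) i (x : PowerSeries K) = 0)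
    (hxn : coeff (R := K) n (x : PowerSeries K) ≠ 0) (f : cuspRing K) :
    f ∈ Ideal.span {x} ↔ ((X : PowerSeries K) ^ n ∣ (f : PowerSeries K) ∧
      coeff (R := K) n (x : PowerSeries K) * coeff (R := K) (n+1) (f : PowerSeries K)
        = coeff (R := K) (n+1) (x : PowerSeries K) * coeff (R := K) n (f : PowerSeries K)) := by
  set w : PowerSeries K := PowerSeries.mk fun i => coeff (R := K) (n + i) (x : PowerSeries K) with hwdef
  have hw : (x : PowerSeries K) = X ^ n * w := eq_X_pow_mul_shift h0
  have hw0 : coeff (R := K) 0 w = coeff (R := K) n (x : PowerSeries K) := by simp [hwdef]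
  have hw1 : coeff (R := K) 1 w = coeff (R := K) (n+1) (x : PowerSeries K) := by simp [hwdef]
  constructor
  · intro hf
    obtain ⟨z, hz⟩ := Ideal.mem_span_singleton'.mp hf
    have hzc : (z : PowerSeries K) * (x : PowerSeries K) = (f : PowerSeries K) := by
      exact_mod_cast congrArg (fun y : cuspRing K => (y : PowerSeries K)) hz
    have hf' : (f : PowerSeries K) = X ^ n * ((z : PowerSeries K) * w) := by
      rw [← hzc, hw]; ring
    constructor
    · exact ⟨(z : PowerSeries K) * w, hf'⟩
    · have e0 : coeff (R := K) n (f : PowerSeries K) = coeff (R := K) 0 ((z : PowerSeries K) * w) := by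
        rw [hf']
        have h' := PowerSeries.coeff_X_pow_mul ((z : PowerSeries K) * w) n 0
        rw [Nat.zero_add] at h'
        exact h'
      have e1 : coeff (R := K) (n+1) (f : PowerSeries K) = coeff (R := K) 1 ((z : PowerSeries K) * w) := by
        rw [hf']
        have h' := PowerSeries.coeff_X_pow_mul ((z : PowerSeries K) * w) n 1
        rw [show 1 + n = n + 1 by omega] at h'
        exact h'
      rw [e0, e1, coeff_mul_zero, coeff_mul_one', coe_coeff_one z, hw0, hw1]
      ring
  · rintro ⟨⟨g, hg⟩, hcross⟩
    have h0f : ∀ i < n, coeff (R := K) i (f : PowerSeries K) = 0 :=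
      PowerSeries.X_pow_dvd_iff.mp ⟨g, hg⟩
    set v : PowerSeries K := PowerSeries.mk fun i => coeff (R := K) (n + i) (f : PowerSeries K)
      with hvdef
    have hv : (f : PowerSeries K) = X ^ n * v := eq_X_pow_mul_shift h0f
    have hv0 : coeff (R := K) 0 v = coeff (R := K) n (f : PowerSeries K) := by simp [hvdef]
    have hv1 : coeff (R := K) 1 v = coeff (R := K) (n+1) (f : PowerSeries K) := by simp [hvdef]
    set u : Kˣ := Units.mk0 _ hxn with hudef
    set h : PowerSeries K := PowerSeries.invOfUnit w u with hhdef
    have hwc : constantCoeff (R := K) w = ↑u := by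
      rw [← PowerSeries.coeff_zero_eq_constantCoeff, hw0]; rfl
    have hwh : w * h = 1 := PowerSeries.mul_invOfUnit w u hwc
    have hh0 : coeff (R := K) 0 h = (coeff (R := K) n (x : PowerSeries K))⁻¹ := by
      rw [PowerSeries.coeff_zero_eq_constantCoeff, hhdef, PowerSeries.constantCoeff_invOfUnit]
      simp [hudef]
    have hE : coeff (R := K) n (x : PowerSeries K) * coeff (R := K) 1 h
        + coeff (R := K) (n+1) (x : PowerSeries K) * (coeff (R := K) n (x : PowerSeries K))⁻¹ = 0 := by
      have := congrArg (coeff (R := K) 1) hwh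
      rw [coeff_mul_one', hw0, hw1, hh0] at this
      simpa using this
    have hh1 : coeff (R := K) 1 h = -(coeff (R := K) (n+1) (x : PowerSeries K))
        * (coeff (R := K) n (x : PowerSeries K))⁻¹ * (coeff (R := K) n (x : PowerSeries K))⁻¹ := by
      field_simp at hE ⊢
      linear_combination hE
    have hz1 : coeff (R := K) 1 (v * h) = 0 := by
      rw [coeff_mul_one', hv0, hv1, hh0, hh1]
      field_simp
      linear_combination hcross
    set z : cuspRing K := ⟨v * h, hz1⟩ with hzdef
    refine Ideal.mem_span_singleton'.mpr ⟨z, Subtype.ext ?_⟩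
    push_cast
    show (v * h) * (x : PowerSeries K) = (f : PowerSeries K)
    rw [hw, hv]
    calc v * h * (X ^ n * w) = X ^ n * v * (w * h) := by ring
    _ = X ^ n * v := by rw [hwh, mul_one]
end CuspAux

set_option maxHeartbeats 800000
set_option synthInstance.maxHeartbeats 200000

namespace CuspAux
open PowerSeries
variable {K : Type*} [Field K]

lemma span_mul_Mgen {n : ℕ} (hn : 2 ≤ n) (a : K) (b : cuspRing K)
    (hb : (b : PowerSeries K) = X ^ 2 * (1 + C (R := K) a * X)) :
    Ideal.span {b} * Mgen K n = Mgen K (n + 2) := by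
  apply le_antisymm
  · rw [Ideal.mul_le]
    intro r hr s hs
    rw [mem_Mgen_iff (by omega)]
    obtain ⟨z, hz⟩ := Ideal.mem_span_singleton'.mp hr
    obtain ⟨t, ht⟩ := (mem_Mgen_iff hn s).mp hs
    have hzc : (z : PowerSeries K) * (b : PowerSeries K) = (r : PowerSeries K) :=
      congrArg (fun y : cuspRing K => (y : PowerSeries K)) hz
    refine ⟨(z : PowerSeries K) * (1 + C (R := K) a * X) * t, ?_⟩
    push_cast
    rw [← hzc, ht, hb]
    ring
  · intro f hf
    obtain ⟨q, hq⟩ := (mem_Mgen_iff (by omega) f).mp hf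
    have hmem : coeff (R := K) 1 (X ^ n * (geom a * q)) = 0 :=
      PowerSeries.X_pow_dvd_iff.mp (dvd_mul_right _ _) 1 (by omega)
    set z : cuspRing K := ⟨X ^ n * (geom a * q), hmem⟩ with hzdef
    have hzM : z ∈ Mgen K n := by
      rw [mem_Mgen_iff hn]
      exact ⟨geom a * q, rfl⟩
    refine Ideal.mem_span_singleton_mul.mpr ⟨z, hzM, Subtype.ext ?_⟩
    push_cast
    rw [hq, hb]
    show X ^ 2 * (1 + C (R := K) a * X) * (X ^ n * (geom a * q)) = X ^ (n + 2) * q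
    calc X ^ 2 * (1 + C (R := K) a * X) * (X ^ n * (geom a * q))
        = X ^ (n + 2) * q * ((1 + C (R := K) a * X) * geom a) := by ring
    _ = X ^ (n + 2) * q := by rw [one_add_mul_geom, mul_one]

lemma Mgen_le_span {m : ℕ} (hm1 : m ≠ 1) :
    Mgen K (m + 2) ≤ Ideal.span {(xE m hm1 : cuspRing K)} := by
  rw [Mgen, Ideal.span_le]
  rintro y (hy | hy)
  · refine SetLike.mem_coe.mpr (Ideal.mem_span_singleton'.mpr ⟨xE 2 (by omega), Subtype.ext ?_⟩)
    push_cast [xE_coe]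
    rw [hy]
    ring
  · refine SetLike.mem_coe.mpr (Ideal.mem_span_singleton'.mpr ⟨xE 3 (by omega), Subtype.ext ?_⟩)
    push_cast [xE_coe]
    rw [hy]
    ring

lemma le_span_imp {k m : ℕ} (hm1 : m ≠ 1) (hk : 2 ≤ k)
    (h : Mgen K k ≤ Ideal.span {(xE m hm1 : cuspRing K)}) : m + 2 ≤ k := by
  have key : ∀ j : ℕ, (hj : j ≠ 1) → (xE j hj : cuspRing K) ∈
      Ideal.span {(xE m hm1 : cuspRing K)} → m ≤ j ∧ j - m ≠ 1 := by
    intro j hj hmem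
    obtain ⟨z, hz⟩ := Ideal.mem_span_singleton'.mp hmem
    have hzc : (z : PowerSeries K) * X ^ m = X ^ j := by
      have := congrArg (fun y : cuspRing K => (y : PowerSeries K)) hz
      push_cast at this
      simpa using this
    have hmj : m ≤ j := by
      by_contra hc
      have := congrArg (coeff (R := K) j) hzc
      rw [PowerSeries.coeff_X_pow] at this
      simp only [if_pos rfl] at this
      have hz0 : coeff (R := K) j ((z : PowerSeries K) * X ^ m) = 0 :=
        PowerSeries.X_pow_dvd_iff.mp (dvd_mul_left _ _) j (by omega)
      rw [hz0] at this
      exact one_ne_zero this.symm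
    have hzeq : (z : PowerSeries K) = X ^ (j - m) := by
      have h2 : (z : PowerSeries K) * X ^ m = X ^ (j - m) * X ^ m := by
        rw [hzc, ← pow_add]
        congr 1
        omega
      exact mul_right_cancel₀ (pow_ne_zero _ (PowerSeries.X_ne_zero (R := K))) h2
    have := coe_coeff_one z
    rw [hzeq, PowerSeries.coeff_X_pow] at this
    constructor
    · exact hmj
    · intro hc
      rw [if_pos hc.symm] at this
      exact one_ne_zero this
  have h1 := key k (by omega) (h (Ideal.subset_span (Or.inl (by simp))))
  have h2 := key (k+1) (by omega) (h (Ideal.subset_span (Or.inr (by simp))))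
  omega

lemma sub_lead_mem {n : ℕ} (hn : 2 ≤ n) (x : cuspRing K)
    (h0 : ∀ i < n, coeff (R := K) i (x : PowerSeries K) = 0) :
    x - cE (coeff (R := K) n (x : PowerSeries K)) * xE n (by omega)
      - cE (coeff (R := K) (n+1) (x : PowerSeries K)) * xE (n+1) (by omega) ∈ Mgen K (n + 2) := by
  rw [mem_Mgen_iff (by omega), PowerSeries.X_pow_dvd_iff]
  intro m hm
  push_cast [cE_coe, xE_coe]
  simp only [map_sub, PowerSeries.coeff_C_mul, PowerSeries.coeff_X_pow]
  rcases Nat.lt_or_ge m n with h | h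
  · rw [h0 m h, if_neg (by omega), if_neg (by omega)]
    ring
  · rcases Nat.eq_or_lt_of_le h with h' | h'
    · subst h'
      rw [if_pos rfl, if_neg (by omega)]
      ring
    · have : m = n + 1 := by omega
      subst this
      rw [if_neg (by omega), if_pos rfl]
      ring

lemma cE_mul_cancel {a : K} (ha : a ≠ 0) (y : cuspRing K) : cE a⁻¹ * (cE a * y) = y := by
  apply Subtype.ext
  push_cast [cE_coe]
  rw [← mul_assoc, ← map_mul, inv_mul_cancel₀ ha, map_one, one_mul]

lemma xE_mem_of_lead {I : Ideal (cuspRing K)} {n : ℕ} (hn : 2 ≤ n) {x : cuspRing K}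
    (hxI : x ∈ I) (h0 : ∀ i < n, coeff (R := K) i (x : PowerSeries K) = 0)
    (hxn : coeff (R := K) n (x : PowerSeries K) ≠ 0)
    (hM : Mgen K (n + 1) ≤ I) : (xE n (by omega) : cuspRing K) ∈ I := by
  have hxe1 : (xE (n+1) (by omega) : cuspRing K) ∈ I := by
    apply hM
    rw [xE_mem_Mgen_iff (by omega)]
  have htail : x - cE (coeff (R := K) n (x : PowerSeries K)) * xE n (by omega)
      - cE (coeff (R := K) (n+1) (x : PowerSeries K)) * xE (n+1) (by omega) ∈ I :=
    hM (Mgen_mono (by omega) (by omega) (sub_lead_mem hn x h0))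
  have hlead : cE (coeff (R := K) n (x : PowerSeries K)) * xE n (by omega) ∈ I := by
    have heq : cE (coeff (R := K) n (x : PowerSeries K)) * xE n (by omega)
        = x - cE (coeff (R := K) (n+1) (x : PowerSeries K)) * xE (n+1) (by omega)
          - (x - cE (coeff (R := K) n (x : PowerSeries K)) * xE n (by omega)
             - cE (coeff (R := K) (n+1) (x : PowerSeries K)) * xE (n+1) (by omega)) := by ring
    rw [heq]
    exact Ideal.sub_mem _ (Ideal.sub_mem _ hxI (Ideal.mul_mem_left _ _ hxe1)) htail
  have := Ideal.mul_mem_left I (cE (coeff (R := K) n (x : PowerSeries K))⁻¹) hlead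
  rwa [cE_mul_cancel hxn] at this

lemma Mgen_le_of {I : Ideal (cuspRing K)} {n : ℕ} (hn : 2 ≤ n)
    {x e : cuspRing K} (hxI : x ∈ I) (h0 : ∀ i < n, coeff (R := K) i (x : PowerSeries K) = 0)
    (hxn : coeff (R := K) n (x : PowerSeries K) ≠ 0)
    (heI : e ∈ I) (he0 : ∀ i < n + 1, coeff (R := K) i (e : PowerSeries K) = 0)
    (hen : coeff (R := K) (n+1) (e : PowerSeries K) ≠ 0) :
    Mgen K n ≤ I := by
  have hspanle : Ideal.span {x} ≤ I := (Ideal.span_singleton_le_iff_mem _).mpr hxI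
  have hXj : ∀ j : ℕ, n + 2 ≤ j → (hj : j ≠ 1) → (xE j hj : cuspRing K) ∈ I := by
    intro j hj hj1
    apply hspanle
    rw [mem_span_singleton_iff hn h0 hxn]
    constructor
    · rw [xE_coe]
      exact pow_dvd_pow _ (by omega)
    · rw [xE_coe, PowerSeries.coeff_X_pow, PowerSeries.coeff_X_pow,
        if_neg (by omega), if_neg (by omega)]
      ring
  have hM2 : Mgen K (n + 2) ≤ I := by
    rw [Mgen, Ideal.span_le]
    rintro y (hy | hy)
    · have : y = xE (n+2) (by omega) := Subtype.ext (by rw [hy, xE_coe])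
      rw [this]
      exact SetLike.mem_coe.mpr (hXj (n+2) (by omega) (by omega))
    · have : y = xE (n+3) (by omega) := Subtype.ext (by rw [hy, xE_coe])
      rw [this]
      exact SetLike.mem_coe.mpr (hXj (n+3) (by omega) (by omega))
  have hxe1 : (xE (n+1) (by omega) : cuspRing K) ∈ I :=
    xE_mem_of_lead (by omega) heI he0 hen hM2
  have hM1 : Mgen K (n + 1) ≤ I := by
    rw [Mgen, Ideal.span_le]
    rintro y (hy | hy)
    · have : y = xE (n+1) (by omega) := Subtype.ext (by rw [hy, xE_coe])
      rw [this]
      exact SetLike.mem_coe.mpr hxe1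
    · have : y = xE (n+2) (by omega) := Subtype.ext (by rw [hy, xE_coe])
      rw [this]
      exact SetLike.mem_coe.mpr (hXj (n+2) (by omega) (by omega))
  have hxen : (xE n (by omega) : cuspRing K) ∈ I :=
    xE_mem_of_lead hn hxI h0 hxn hM1
  rw [Mgen, Ideal.span_le]
  rintro y (hy | hy)
  · have : y = xE n (by omega) := Subtype.ext (by rw [hy, xE_coe])
    rw [this]
    exact SetLike.mem_coe.mpr hxen
  · have : y = xE (n+1) (by omega) := Subtype.ext (by rw [hy, xE_coe])
    rw [this]
    exact SetLike.mem_coe.mpr hxe1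

end CuspAux

namespace CuspAux
open PowerSeries
variable {K : Type*} [Field K]

lemma exists_coeff_ne_zero {J : Ideal (cuspRing K)} (hJ : J ≠ ⊥) :
    ∃ i : ℕ, ∃ x ∈ J, coeff (R := K) i (x : PowerSeries K) ≠ 0 := by
  obtain ⟨x, hxJ, hx0⟩ := Submodule.exists_mem_ne_zero_of_ne_bot hJ
  have : (x : PowerSeries K) ≠ 0 := fun h => hx0 (Subtype.ext h)
  by_contra hc
  push_neg at hc
  apply this
  ext i
  simpa using hc i x hxJ

/-- order bound data for a nonzero ideal -/
lemma ideal_order {J : Ideal (cuspRing K)} (hJ : J ≠ ⊥) :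
    ∃ n : ℕ, (∃ x ∈ J, coeff (R := K) n (x : PowerSeries K) ≠ 0) ∧
      (∀ i < n, ∀ x ∈ J, coeff (R := K) i (x : PowerSeries K) = 0) := by
  set S := {i : ℕ | ∃ x ∈ J, coeff (R := K) i (x : PowerSeries K) ≠ 0} with hS
  have hSne : S.Nonempty := exists_coeff_ne_zero hJ
  refine ⟨sInf S, Nat.sInf_mem hSne, ?_⟩
  intro i hi x hx
  by_contra h
  exact Nat.notMem_of_lt_sInf hi ⟨x, hx, h⟩

lemma unit_mem_top {I : Ideal (cuspRing K)} {x : cuspRing K} (hxI : x ∈ I)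
    (hx0 : coeff (R := K) 0 (x : PowerSeries K) ≠ 0) : I = ⊤ := by
  set u : Kˣ := Units.mk0 _ hx0
  set h : PowerSeries K := PowerSeries.invOfUnit (x : PowerSeries K) u with hhdef
  have hxc : constantCoeff (R := K) (x : PowerSeries K) = ↑u := by
    rw [← PowerSeries.coeff_zero_eq_constantCoeff]; rfl
  have hxh : (x : PowerSeries K) * h = 1 := PowerSeries.mul_invOfUnit _ u hxc
  have hh1 : coeff (R := K) 1 h = 0 := by
    have := congrArg (coeff (R := K) 1) hxh
    rw [coeff_mul_one', coe_coeff_one] at this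
    simp only [PowerSeries.coeff_one, if_neg one_ne_zero] at this
    have h2 : coeff (R := K) 0 (x : PowerSeries K) * coeff (R := K) 1 h = 0 := by linear_combination this
    exact (mul_eq_zero.mp h2).resolve_left hx0
  set hR : cuspRing K := ⟨h, hh1⟩
  have : (1 : cuspRing K) ∈ I := by
    have : x * hR ∈ I := Ideal.mul_mem_right _ _ hxI
    have heq : x * hR = 1 := Subtype.ext (by push_cast; exact hxh)
    rwa [heq] at this
  exact (Ideal.eq_top_iff_one I).mpr this

lemma classify (I : Ideal (cuspRing K)) :
    I = ⊥ ∨ (∃ x : cuspRing K, I = Ideal.span {x}) ∨ (∃ n, 2 ≤ n ∧ I = Mgen K n) := by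
  by_cases hbot : I = ⊥
  · exact Or.inl hbot
  right
  obtain ⟨n, ⟨x, hxI, hxn⟩, hmin⟩ := ideal_order hbot
  have h0 : ∀ i < n, coeff (R := K) i (x : PowerSeries K) = 0 := fun i hi => hmin i hi x hxI
  have hn1 : n ≠ 1 := by
    intro h
    subst h
    exact hxn (coe_coeff_one x)
  rcases Nat.eq_zero_or_pos n with hn0 | hnpos
  · subst hn0
    left
    exact ⟨1, by rw [unit_mem_top hxI hxn, Ideal.span_singleton_one]⟩
  have hn2 : 2 ≤ n := by omega
  by_cases hP : ∀ f ∈ I, coeff (R := K) n (x : PowerSeries K) * coeff (R := K) (n+1) (f : PowerSeries K)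
      = coeff (R := K) (n+1) (x : PowerSeries K) * coeff (R := K) n (f : PowerSeries K)
  · left
    refine ⟨x, le_antisymm (fun f hf => ?_) ((Ideal.span_singleton_le_iff_mem _).mpr hxI)⟩
    rw [mem_span_singleton_iff hn2 h0 hxn]
    exact ⟨PowerSeries.X_pow_dvd_iff.mpr (fun m hm => hmin m hm f hf), hP f hf⟩
  · right
    push_neg at hP
    obtain ⟨h, hhI, hne⟩ := hP
    set e : cuspRing K := cE (coeff (R := K) n (x : PowerSeries K)) * h
      - cE (coeff (R := K) n (h : PowerSeries K)) * x with hedef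
    have heI : e ∈ I := Ideal.sub_mem _ (Ideal.mul_mem_left _ _ hhI) (Ideal.mul_mem_left _ _ hxI)
    have hecoeff : ∀ i : ℕ, coeff (R := K) i (e : PowerSeries K)
        = coeff (R := K) n (x : PowerSeries K) * coeff (R := K) i (h : PowerSeries K)
          - coeff (R := K) n (h : PowerSeries K) * coeff (R := K) i (x : PowerSeries K) := by
      intro i
      rw [hedef]
      push_cast [cE_coe]
      rw [map_sub, PowerSeries.coeff_C_mul, PowerSeries.coeff_C_mul]
    have he0 : ∀ i < n + 1, coeff (R := K) i (e : PowerSeries K) = 0 := by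
      intro i hi
      rw [hecoeff i]
      rcases Nat.lt_or_ge i n with hilt | hige
      · rw [hmin i hilt h hhI, h0 i hilt]
        ring
      · have : i = n := by omega
        subst this
        ring
    have hen : coeff (R := K) (n+1) (e : PowerSeries K) ≠ 0 := by
      rw [hecoeff (n+1)]
      intro hc
      apply hne
      linear_combination hc
    refine ⟨n, hn2, le_antisymm (fun f hf => ?_) (Mgen_le_of hn2 hxI h0 hxn heI he0 hen)⟩
    rw [mem_Mgen_iff hn2]
    exact PowerSeries.X_pow_dvd_iff.mpr (fun m hm => hmin m hm f hf)

lemma stable_eq_Mgen {J : Ideal (cuspRing K)} (hJ : J ≠ ⊥)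
    (hst : ∀ x ∈ J, ∃ y ∈ J, (y : PowerSeries K) = X * (x : PowerSeries K)) :
    ∃ k, 2 ≤ k ∧ J = Mgen K k := by
  obtain ⟨k, ⟨x, hxJ, hxk⟩, hmin⟩ := ideal_order hJ
  have hk1 : k ≠ 1 := by
    intro h
    subst h
    exact hxk (coe_coeff_one x)
  have hk0 : k ≠ 0 := by
    intro h
    subst h
    obtain ⟨y, hyJ, hy⟩ := hst x hxJ
    have : coeff (R := K) 1 (y : PowerSeries K) = coeff (R := K) 0 (x : PowerSeries K) := by
      rw [hy, PowerSeries.coeff_succ_X_mul]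
    rw [coe_coeff_one y] at this
    exact hxk this.symm
  have hk2 : 2 ≤ k := by omega
  obtain ⟨y, hyJ, hy⟩ := hst x hxJ
  have h0 : ∀ i < k, coeff (R := K) i (x : PowerSeries K) = 0 := fun i hi => hmin i hi x hxJ
  have hy0 : ∀ i < k + 1, coeff (R := K) i (y : PowerSeries K) = 0 := by
    intro i hi
    match i with
    | 0 => rw [hy]; simp
    | i + 1 =>
      rw [hy, PowerSeries.coeff_succ_X_mul]
      exact h0 i (by omega)
  have hyk : coeff (R := K) (k+1) (y : PowerSeries K) ≠ 0 := by
    rw [hy, PowerSeries.coeff_succ_X_mul]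
    exact hxk
  refine ⟨k, hk2, le_antisymm (fun f hf => ?_) (Mgen_le_of hk2 hxJ h0 hxk hyJ hy0 hyk)⟩
  rw [mem_Mgen_iff hk2]
  exact PowerSeries.X_pow_dvd_iff.mpr (fun m hm => hmin m hm f hf)

end CuspAux

namespace CuspAux
open PowerSeries
variable {K : Type*} [Field K]

variable {c : Ideal (cuspRing K) → Ideal (cuspRing K)}

lemma nzd {b : cuspRing K} (hb : b ≠ 0) : b ∈ nonZeroDivisors (cuspRing K) :=
  mem_nonZeroDivisors_of_ne_zero hb

lemma c_top (hc : IsPrimeOperation c) : c ⊤ = ⊤ :=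
  eq_top_iff.mpr (hc.1.1.1 ⊤)

lemma c_span (hc : IsPrimeOperation c) {b : cuspRing K} (hb : b ≠ 0) :
    c (Ideal.span {b}) = Ideal.span {b} := by
  have := hc.2 b (nzd hb) ⊤
  rwa [Ideal.mul_top, c_top hc, Ideal.mul_top] at this

lemma c_bot (hc : IsPrimeOperation c) : c (⊥ : Ideal (cuspRing K)) = ⊥ := by
  set b : cuspRing K := xE 2 (by omega) with hbdef
  have hb : b ≠ 0 := xE_ne_zero 2 (by omega)
  have hstep : c (⊥ : Ideal (cuspRing K)) = Ideal.span {b} * c ⊥ := by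
    have := hc.2 b (nzd hb) ⊥
    rwa [Ideal.mul_bot] at this
  have key : ∀ m : ℕ, c (⊥ : Ideal (cuspRing K)) ≤ Ideal.span {b ^ m} := by
    intro m
    induction m with
    | zero => simp [Ideal.span_singleton_one]
    | succ m ih =>
      calc c (⊥ : Ideal (cuspRing K)) = Ideal.span {b} * c ⊥ := hstep
      _ ≤ Ideal.span {b} * Ideal.span {b ^ m} := Ideal.mul_mono_right ih
      _ = Ideal.span {b ^ (m + 1)} := by
          rw [Ideal.span_singleton_mul_span_singleton, ← pow_succ']
  refine le_bot_iff.mp (fun x hx => ?_)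
  rw [Ideal.mem_bot]
  apply Subtype.ext
  ext i
  obtain ⟨z, hz⟩ := Ideal.mem_span_singleton'.mp (key (i + 1) hx)
  have hzc : (z : PowerSeries K) * (X ^ 2) ^ (i + 1) = (x : PowerSeries K) := by
    have := congrArg (fun y : cuspRing K => (y : PowerSeries K)) hz
    push_cast at this
    simpa [hbdef] using this
  have hdvd : (X : PowerSeries K) ^ (2 * (i + 1)) ∣ (x : PowerSeries K) := by
    refine ⟨(z : PowerSeries K), ?_⟩
    rw [← hzc, ← pow_mul]
    ring
  rw [PowerSeries.X_pow_dvd_iff.mp hdvd i (by omega)]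
  simp

lemma c_Mgen_exists (hc : IsPrimeOperation c) {n : ℕ} (hn : 2 ≤ n) :
    ∃ k, 2 ≤ k ∧ c (Mgen K n) = Mgen K k ∧
      Ideal.span {(xE 2 (by omega) : cuspRing K)} * c (Mgen K n) = c (Mgen K (n + 2)) := by
  set b : cuspRing K := xE 2 (by omega) with hbdef
  have hb : b ≠ 0 := xE_ne_zero 2 (by omega)
  have hbco : (b : PowerSeries K) = X ^ 2 * (1 + C (R := K) 0 * X) := by
    rw [hbdef, xE_coe]
    simp
  set b' : cuspRing K := ⟨X ^ 2 * (1 + C (R := K) 1 * X), by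
    have : (X : PowerSeries K) ^ 2 ∣ X ^ 2 * (1 + C (R := K) 1 * X) := dvd_mul_right _ _
    exact PowerSeries.X_pow_dvd_iff.mp this 1 (by omega)⟩ with hb'def
  have hb'co : (b' : PowerSeries K) = X ^ 2 * (1 + C (R := K) 1 * X) := rfl
  have hb' : b' ≠ 0 := by
    intro h
    have := congrArg (fun y : cuspRing K => (y : PowerSeries K)) h
    simp only [hb'co] at this
    have h2 : coeff (R := K) 2 ((X : PowerSeries K) ^ 2 * (1 + C (R := K) 1 * X)) = 1 := by
      have : (X : PowerSeries K) ^ 2 * (1 + C (R := K) 1 * X) = X ^ 2 + C (R := K) 1 * X ^ 3 := by ring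
      rw [this]
      simp [PowerSeries.coeff_X_pow, PowerSeries.coeff_C_mul]
    rw [this] at h2
    simp at h2
  have h1 : c (Mgen K (n + 2)) = Ideal.span {b} * c (Mgen K n) := by
    rw [← span_mul_Mgen hn 0 b hbco]
    exact hc.2 b (nzd hb) (Mgen K n)
  have h2 : c (Mgen K (n + 2)) = Ideal.span {b'} * c (Mgen K n) := by
    rw [← span_mul_Mgen hn 1 b' hb'co]
    exact hc.2 b' (nzd hb') (Mgen K n)
  have hst : ∀ x ∈ c (Mgen K n), ∃ y ∈ c (Mgen K n),
      (y : PowerSeries K) = X * (x : PowerSeries K) := by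
    intro x hx
    have hmem : b' * x ∈ Ideal.span {b} * c (Mgen K n) := by
      rw [← h1, h2]
      exact Ideal.mul_mem_mul (Ideal.mem_span_singleton_self b') hx
    obtain ⟨y, hy, hby⟩ := Ideal.mem_span_singleton_mul.mp hmem
    have hbyc : (b : PowerSeries K) * (y : PowerSeries K)
        = (b' : PowerSeries K) * (x : PowerSeries K) := by
      have := congrArg (fun t : cuspRing K => (t : PowerSeries K)) hby
      push_cast at this
      exact this
    have hyx : (y : PowerSeries K) = (x : PowerSeries K) + X * (x : PowerSeries K) := by
      apply mul_left_cancel₀ (pow_ne_zero 2 (PowerSeries.X_ne_zero (R := K)))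
      rw [show (X : PowerSeries K) ^ 2 * (y : PowerSeries K) = (b : PowerSeries K) * y from by
        rw [hbdef, xE_coe], hbyc, hb'co]
      ring_nf
      rw [map_one]
      ring
    refine ⟨y - x, Ideal.sub_mem _ hy hx, ?_⟩
    push_cast
    rw [hyx]
    ring
  have hne : c (Mgen K n) ≠ ⊥ := by
    intro h
    have h1' : Mgen K n ≤ c (Mgen K n) := hc.1.1.1 _
    rw [h] at h1'
    exact Mgen_ne_bot hn (le_bot_iff.mp h1')
  obtain ⟨k, hk2, hk⟩ := stable_eq_Mgen hne hst
  exact ⟨k, hk2, hk, h1.symm⟩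

lemma c_Mgen_big (hc : IsPrimeOperation c) {n : ℕ} (hn : 4 ≤ n) :
    c (Mgen K n) = Mgen K n := by
  obtain ⟨m, rfl⟩ : ∃ m, n = m + 2 := ⟨n - 2, by omega⟩
  have hm : 2 ≤ m := by omega
  obtain ⟨k, hk2, hck, _⟩ := c_Mgen_exists hc (show 2 ≤ m + 2 by omega)
  have hupper : c (Mgen K (m + 2)) ≤ Ideal.span {(xE m (show m ≠ 1 by omega) : cuspRing K)} := by
    calc c (Mgen K (m + 2)) ≤ c (Ideal.span {(xE m (show m ≠ 1 by omega) : cuspRing K)}) :=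
          hc.1.1.2.1 _ _ (Mgen_le_span _)
    _ = Ideal.span {(xE m (show m ≠ 1 by omega) : cuspRing K)} :=
          c_span hc (xE_ne_zero m _)
  rw [hck] at hupper
  have hklow : m + 2 ≤ k := le_span_imp _ hk2 hupper
  have hkup : k ≤ m + 2 := by
    have hle : Mgen K (m + 2) ≤ Mgen K k := by
      rw [← hck]
      exact hc.1.1.1 _
    have := hle (Ideal.subset_span (Or.inl (by simp)) :
      (xE (m + 2) (show m + 2 ≠ 1 by omega) : cuspRing K) ∈ Mgen K (m + 2))
    exact (xE_mem_Mgen_iff hk2 _).mp this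
  have : k = m + 2 := by omega
  rw [hck, this]

lemma c_Mgen (hc : IsPrimeOperation c) {n : ℕ} (hn : 2 ≤ n) :
    c (Mgen K n) = Mgen K n := by
  obtain ⟨k, hk2, hck, hshift⟩ := c_Mgen_exists hc hn
  rw [hck] at hshift
  have hcoe : ((xE 2 (show (2:ℕ) ≠ 1 by omega) : cuspRing K) : PowerSeries K)
      = X ^ 2 * (1 + C (R := K) 0 * X) := by
    rw [xE_coe]; simp
  rw [span_mul_Mgen hk2 0 _ hcoe] at hshift
  rw [c_Mgen_big hc (show 4 ≤ n + 2 by omega)] at hshift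
  have : k + 2 = n + 2 := Mgen_inj (by omega) (by omega) hshift
  rw [hck, show k = n by omega]

end CuspAux

open CuspAux in
theorem cusp_prime_operation_eq_id {K : Type*} [Field K]
    (c : Ideal (cuspRing K) → Ideal (cuspRing K)) :
    IsPrimeOperation c ↔ c = id := by
  constructor
  · intro hc
    funext I
    simp only [id_eq]
    rcases classify I with hbot | ⟨x, rfl⟩ | ⟨n, hn, rfl⟩
    · rw [hbot]
      exact c_bot hc
    · by_cases hx : x = 0
      · subst hx
        rw [show (Ideal.span {(0 : cuspRing K)}) = ⊥ by simp]
        exact c_bot hc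
      · exact c_span hc hx
    · exact c_Mgen hc hn
  · rintro rfl
    exact ⟨⟨⟨fun I => le_rfl, fun I J h => h, fun I => rfl⟩, fun I J => le_rfl⟩,
      fun b hb I => rfl⟩
end
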